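/- Let (Z, ≤) be a linear order, let X ⊆ Z, and let P_1, …, P_m be pairwise disjoint subsets of Z (distinct blocks of a partition of Z). For j ≥ 1 write ρ(j) = ((j − 1) mod m) + 1. Then the following are equivalent: (1) for every k ∈ ℕ there exist elements x_1 ≤ x_2 ≤ … ≤ x_{km} of X with x_j ∈ P_{ρ(j)} for every j ≤ km (i.e., the finite string (P_1⋯P_m)^k is generated by X for every k); (2) there exists a monotone sequence (x_j)_{j≥1} of elements of X — nondecreasing or nonincreasing — with x_j ∈ P_{ρ(j)} for every j ≥ 1 (i.e., the infinite string (P_1⋯P_m)^ω is generated by X). -/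
import Mathlib

namespace Stmt17Aux

variable {Z : Type} [LinearOrder Z]

/-- a pattern chain of length `k*m` inside `C`. -/
def IsCh (X : Set Z) (m : ℕ) (hm : 0 < m) (P : Fin m → Set Z) (C : Set Z) (k : ℕ) : Prop :=
  ∃ c : ℕ → Z, (∀ j < k * m, c j ∈ X) ∧
    (∀ i j : ℕ, i ≤ j → j < k * m → c i ≤ c j) ∧
    (∀ j < k * m, c j ∈ P ⟨j % m, Nat.mod_lt j hm⟩) ∧
    (∀ j < k * m, c j ∈ C)

def Rich (X : Set Z) (m : ℕ) (hm : 0 < m) (P : Fin m → Set Z) (C : Set Z) : Prop :=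
  ∀ k, IsCh X m hm P C k

lemma Pc {m : ℕ} (P : Fin m → Set Z) {a b : ℕ} (ha : a < m) (hb : b < m) (h : a = b)
    {z : Z} (hz : z ∈ P ⟨a, ha⟩) : z ∈ P ⟨b, hb⟩ := by subst h; exact hz

lemma isch_zero (X : Set Z) (m : ℕ) (hm : 0 < m) (P : Fin m → Set Z) (C : Set Z) (z0 : Z) :
    IsCh X m hm P C 0 := by
  refine ⟨fun _ => z0, ?_, ?_, ?_, ?_⟩ <;> intro j <;> intros <;> omega

/-- dependent choice -/
lemma dc {α : Type*} (R : α → α → Prop) (h : ∀ a, ∃ b, R a b) (a0 : α) :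
    ∃ f : ℕ → α, f 0 = a0 ∧ ∀ n, R (f n) (f (n + 1)) := by
  choose g hg using h
  refine ⟨fun n => g^[n] a0, rfl, fun n => ?_⟩
  show R (g^[n] a0) (g^[n + 1] a0)
  rw [Function.iterate_succ_apply']
  exact hg _

/-- the suffix dichotomy: if `C` is rich then above `p` or strictly below `p` is rich. -/
lemma fact (X : Set Z) (m : ℕ) (hm : 0 < m) (P : Fin m → Set Z) (C : Set Z) (z0 : Z)
    (hC : Rich X m hm P C) (p : Z) :
    Rich X m hm P (C ∩ Set.Ici p) ∨ Rich X m hm P (C ∩ Set.Iio p) := by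
  by_cases h : Rich X m hm P (C ∩ Set.Ici p)
  · exact Or.inl h
  right
  rw [Rich] at h
  push_neg at h
  obtain ⟨k0, hk0⟩ := h
  have hk0pos : 0 < k0 := by
    rcases Nat.eq_zero_or_pos k0 with h0 | h0
    · exact absurd (h0 ▸ isch_zero X m hm P (C ∩ Set.Ici p) z0) hk0
    · exact h0
  intro k
  obtain ⟨c, h1, h2, h3, h4⟩ := hC (k + k0)
  have hadd : (k + k0) * m = k * m + k0 * m := add_mul k k0 m
  have hk0m : 0 < k0 * m := Nat.mul_pos hk0pos hm
  have hkm : k * m < (k + k0) * m := by omega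
  have htop : c (k * m) < p := by
    by_contra hcon
    push_neg at hcon
    apply hk0
    refine ⟨fun j => c (k * m + j), ?_, ?_, ?_, ?_⟩
    · intro j hj; exact h1 _ (by omega)
    · intro i j hij hj; exact h2 _ _ (by omega) (by omega)
    · intro j hj
      have hb : k * m + j < (k + k0) * m := by omega
      have := h3 (k * m + j) hb
      exact Pc P _ _ (by rw [Nat.add_comm (k * m) j, Nat.add_mul_mod_self_right]) this
    · intro j hj
      have hb : k * m + j < (k + k0) * m := by omega
      refine ⟨h4 _ hb, ?_⟩
      exact le_trans hcon (h2 (k * m) (k * m + j) (by omega) hb)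
  refine ⟨c, ?_, ?_, ?_, ?_⟩
  · intro j hj; exact h1 _ (by omega)
  · intro i j hij hj; exact h2 _ _ hij (by omega)
  · intro j hj; exact h3 _ (by omega)
  · intro j hj
    refine ⟨h4 _ (by omega), ?_⟩
    exact lt_of_le_of_lt (h2 j (k * m) (by omega) hkm) htop

/-- extraction of a decreasing one-period block from a chain of `m` periods. -/
lemma block (X : Set Z) (m : ℕ) (hm : 0 < m) (P : Fin m → Set Z) (C : Set Z) (c : ℕ → Z)
    (h1 : ∀ j < m * m, c j ∈ X) (h2 : ∀ i j : ℕ, i ≤ j → j < m * m → c i ≤ c j)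
    (h3 : ∀ j < m * m, c j ∈ P ⟨j % m, Nat.mod_lt j hm⟩) (h4 : ∀ j < m * m, c j ∈ C) :
    ∃ B : ℕ → Z, (∀ i, B i ∈ X) ∧ (∀ i, B i ∈ C) ∧
      (∀ i, B i ∈ P ⟨i % m, Nat.mod_lt i hm⟩) ∧
      (∀ i j, i ≤ j → j < m → B j ≤ B i) ∧ B (m - 1) = c (m - 1) := by
  have hidx : ∀ i : ℕ, (m - 1 - i % m) * m + i % m < m * m := by
    intro i
    have hr : i % m < m := Nat.mod_lt i hm
    have h1' : (m - 1 - i % m) * m ≤ (m - 1) * m :=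
      Nat.mul_le_mul_right m (by omega)
    have h2' : (m - 1) * m + m = m * m := by
      have h3' : (m - 1 + 1) * m = (m - 1) * m + m := Nat.succ_mul (m - 1) m
      have h4' : m - 1 + 1 = m := by omega
      rw [h4'] at h3'
      omega
    omega
  refine ⟨fun i => c ((m - 1 - i % m) * m + i % m), fun i => h1 _ (hidx i),
    fun i => h4 _ (hidx i), ?_, ?_, ?_⟩
  · intro i
    have hr : i % m < m := Nat.mod_lt i hm
    have := h3 _ (hidx i)
    refine Pc P _ _ ?_ this
    rw [Nat.add_comm ((m - 1 - i % m) * m) (i % m), Nat.add_mul_mod_self_right]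
    exact Nat.mod_eq_of_lt hr
  · intro i j hij hjm
    have hi : i % m = i := Nat.mod_eq_of_lt (by omega)
    have hj : j % m = j := Nat.mod_eq_of_lt hjm
    refine h2 _ _ ?_ (hidx i)
    rw [hi, hj]
    have hd : (m - 1 - j) + (j - i) = m - 1 - i := by omega
    have : (m - 1 - i) * m = (m - 1 - j) * m + (j - i) * m := by
      rw [← hd, add_mul]
    have hdd : (j - i) ≤ (j - i) * m := Nat.le_mul_of_pos_right (j - i) hm
    omega
  · have hr : (m - 1) % m = m - 1 := Nat.mod_eq_of_lt (by omega)
    have : (m - 1 - (m - 1) % m) * m + (m - 1) % m = m - 1 := by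
      rw [hr]; simp
    exact congrArg c this

/-- MASTER: rich set, no infinite nondecreasing pattern sequence ⇒ decreasing block
with rich strictly below its minimum. -/
lemma master (X : Set Z) (m : ℕ) (hm : 0 < m) (P : Fin m → Set Z) (C : Set Z) (z0 : Z)
    (hC : Rich X m hm P C)
    (hni : ¬ ∃ x : ℕ → Z, (∀ j, x j ∈ X) ∧ (∀ j, x j ≤ x (j + 1)) ∧
      (∀ j, x j ∈ P ⟨j % m, Nat.mod_lt j hm⟩)) :
    ∃ B : ℕ → Z, (∀ i, B i ∈ X) ∧ (∀ i, B i ∈ C) ∧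
      (∀ i, B i ∈ P ⟨i % m, Nat.mod_lt i hm⟩) ∧
      (∀ i j, i ≤ j → j < m → B j ≤ B i) ∧
      Rich X m hm P (C ∩ Set.Iio (B (m - 1))) := by
  have hmm : m ≤ m * m := by
    have := Nat.mul_le_mul_left m hm
    calc m = m * 1 := (Nat.mul_one m).symm
    _ ≤ m * m := Nat.mul_le_mul_left m hm
  by_cases hcase : ∃ c : ℕ → Z, (∀ j < m * m, c j ∈ X) ∧
      (∀ i j : ℕ, i ≤ j → j < m * m → c i ≤ c j) ∧
      (∀ j < m * m, c j ∈ P ⟨j % m, Nat.mod_lt j hm⟩) ∧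
      (∀ j < m * m, c j ∈ C) ∧ Rich X m hm P (C ∩ Set.Iio (c (m - 1)))
  · obtain ⟨c, h1, h2, h3, h4, h5⟩ := hcase
    obtain ⟨B, b1, b2, b3, b4, b5⟩ := block X m hm P C c h1 h2 h3 h4
    exact ⟨B, b1, b2, b3, b4, by rw [b5]; exact h5⟩
  · exfalso
    apply hni
    -- key step: from rich-above-q get a chain whose top is again rich-above
    have key : ∀ q : Z, Rich X m hm P (C ∩ Set.Ici q) →
        ∃ c : ℕ → Z, (∀ j < m * m, c j ∈ X) ∧
          (∀ i j : ℕ, i ≤ j → j < m * m → c i ≤ c j) ∧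
          (∀ j < m * m, c j ∈ P ⟨j % m, Nat.mod_lt j hm⟩) ∧
          (∀ j < m * m, c j ∈ C ∩ Set.Ici q) ∧
          Rich X m hm P (C ∩ Set.Ici (c (m - 1))) := by
      intro q hq
      obtain ⟨c, h1, h2, h3, h4⟩ := hq m
      have hC4 : ∀ j < m * m, c j ∈ C := fun j hj => (h4 j hj).1
      rcases fact X m hm P C z0 hC (c (m - 1)) with hgood | hbad
      · exact ⟨c, h1, h2, h3, h4, hgood⟩
      · exact absurd ⟨c, h1, h2, h3, hC4, hbad⟩ hcase
    -- base point
    obtain ⟨c0, g1, g2, g3, g4⟩ := hC m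
    have hbase : Rich X m hm P (C ∩ Set.Ici (c0 (m - 1))) := by
      rcases fact X m hm P C z0 hC (c0 (m - 1)) with hgood | hbad
      · exact hgood
      · exact absurd ⟨c0, g1, g2, g3, g4, hbad⟩ hcase
    -- dependent choice on states
    set α := {q : Z // Rich X m hm P (C ∩ Set.Ici q)} with hα
    have hstep : ∀ a : α, ∃ b : α, ∃ c : ℕ → Z, (∀ j < m * m, c j ∈ X) ∧
        (∀ i j : ℕ, i ≤ j → j < m * m → c i ≤ c j) ∧
        (∀ j < m * m, c j ∈ P ⟨j % m, Nat.mod_lt j hm⟩) ∧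
        (∀ j < m * m, c j ∈ C ∩ Set.Ici a.1) ∧ c (m - 1) = b.1 := by
      rintro ⟨q, hq⟩
      obtain ⟨c, h1, h2, h3, h4, h5⟩ := key q hq
      exact ⟨⟨c (m - 1), h5⟩, c, h1, h2, h3, h4, rfl⟩
    obtain ⟨f, hf0, hfR⟩ := dc _ hstep ⟨c0 (m - 1), hbase⟩
    choose g k1 k2 k3 k4 k5 using hfR
    refine ⟨fun j => g (j / m) (j % m), ?_, ?_, ?_⟩
    · intro j
      exact k1 _ _ (lt_of_lt_of_le (Nat.mod_lt j hm) hmm)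
    · intro j
      show g (j / m) (j % m) ≤ g ((j + 1) / m) ((j + 1) % m)
      obtain ⟨q, r, hrm, hj⟩ : ∃ q r, r < m ∧ j = m * q + r :=
        ⟨j / m, j % m, Nat.mod_lt j hm, (Nat.div_add_mod j m).symm⟩
      have hdiv : j / m = q := by
        rw [hj, Nat.mul_add_div hm, Nat.div_eq_of_lt hrm]; omega
      have hmod : j % m = r := by
        rw [hj, Nat.mul_add_mod, Nat.mod_eq_of_lt hrm]
      rw [hdiv, hmod]
      by_cases hb : r + 1 < m
      · have hj1 : j + 1 = m * q + (r + 1) := by omega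
        have hdiv1 : (j + 1) / m = q := by
          rw [hj1, Nat.mul_add_div hm, Nat.div_eq_of_lt hb]; omega
        have hmod1 : (j + 1) % m = r + 1 := by
          rw [hj1, Nat.mul_add_mod, Nat.mod_eq_of_lt hb]
        rw [hdiv1, hmod1]
        exact k2 q r (r + 1) (Nat.le_succ r) (lt_of_lt_of_le hb hmm)
      · have hbe : r = m - 1 := by omega
        have hj1 : j + 1 = m * (q + 1) := by
          have : m * (q + 1) = m * q + m := Nat.mul_succ m q
          omega
        have hdiv1 : (j + 1) / m = q + 1 := by
          rw [hj1, Nat.mul_div_cancel_left _ hm]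
        have hmod1 : (j + 1) % m = 0 := by
          rw [hj1, Nat.mul_mod_right]
        rw [hdiv1, hmod1, hbe]
        have hmem := (k4 (q + 1) 0 (Nat.mul_pos hm hm)).2
        rw [k5 q]
        exact hmem
    · intro j
      have := k3 (j / m) (j % m) (lt_of_lt_of_le (Nat.mod_lt j hm) hmm)
      exact Pc P _ _ (Nat.mod_eq_of_lt (Nat.mod_lt j hm)) this

/-- arithmetic core for the reversed reindexing in the easy direction -/
lemma Fcore (m k qi ri qj rj : ℕ) (hm : 0 < m) (hri : ri < m) (hrj : rj < m) (hqj : qj < k)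
    (hle : qi < qj ∨ (qi = qj ∧ ri ≤ rj)) :
    m * ((k - qj) * m - rj) + rj ≤ m * ((k - qi) * m - ri) + ri := by
  rcases hle with hlt | ⟨heq, hrle⟩
  · -- different periods
    have hv : 1 ≤ k - qj := by omega
    have huv : (k - qj) + 1 ≤ k - qi := by omega
    set u := k - qi with hu
    set v := k - qj with hvdef
    have f2 : u * m = (u - 1) * m + m := by
      have h3' : (u - 1 + 1) * m = (u - 1) * m + m := Nat.succ_mul (u - 1) m
      have h4' : u - 1 + 1 = u := by omega
      rw [h4'] at h3'; exact h3'
    have f1 : m * (v * m - rj) ≤ m * (v * m) :=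
      Nat.mul_le_mul_left m (Nat.sub_le _ _)
    have f3 : v * m ≤ (u - 1) * m := Nat.mul_le_mul_right m (by omega)
    have f7 : m * (v * m) ≤ m * ((u - 1) * m) := Nat.mul_le_mul_left m f3
    have f5 : u * m - (m - 1) = (u - 1) * m + 1 := by
      have hum : m ≤ u * m := by
        calc m = 1 * m := (Nat.one_mul m).symm
        _ ≤ u * m := Nat.mul_le_mul_right m (by omega)
      omega
    have f6 : m * ((u - 1) * m + 1) = m * ((u - 1) * m) + m := by
      rw [Nat.mul_add, Nat.mul_one]
    have h8 : m * (u * m - (m - 1)) ≤ m * (u * m - ri) :=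
      Nat.mul_le_mul_left m (Nat.sub_le_sub_left (by omega) _)
    have h9 : m * (u * m - (m - 1)) = m * ((u - 1) * m + 1) := by rw [f5]
    omega
  · -- same period
    subst heq
    set A := (k - qi) * m with hA
    have hAm : m ≤ A := by
      calc m = 1 * m := (Nat.one_mul m).symm
      _ ≤ (k - qi) * m := Nat.mul_le_mul_right m (by omega)
    have e0 : A - ri = (A - rj) + (rj - ri) := by omega
    have e1 : m * (A - ri) = m * (A - rj) + m * (rj - ri) := by
      rw [e0, Nat.mul_add]
    have e2 : rj - ri ≤ m * (rj - ri) := Nat.le_mul_of_pos_left (rj - ri) hm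
    omega

end Stmt17Aux

open Stmt17Aux in
/-- for pairwise disjoint sets `P_1, …, P_m` in a linear order and
`X ⊆ Z`, the finite string `(P_1 ⋯ P_m)^k` is generated by `X` for every `k`
iff the infinite string `(P_1 ⋯ P_m)^ω` is generated by `X` (by a monotone
sequence). -/
theorem stmt_17 {Z : Type} [LinearOrder Z] (X : Set Z) (m : ℕ) (hm : 0 < m)
    (P : Fin m → Set Z) (hdisj : ∀ i j : Fin m, i ≠ j → Disjoint (P i) (P j)) :
    (∀ k : ℕ, ∃ x : ℕ → Z,
        (∀ j < k * m, x j ∈ X) ∧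
        (∀ i j : ℕ, i ≤ j → j < k * m → x i ≤ x j) ∧
        (∀ j < k * m, x j ∈ P ⟨j % m, Nat.mod_lt j hm⟩)) ↔
      (∃ x : ℕ → Z,
        (∀ j, x j ∈ X) ∧
        ((∀ j, x j ≤ x (j + 1)) ∨ (∀ j, x (j + 1) ≤ x j)) ∧
        (∀ j, x j ∈ P ⟨j % m, Nat.mod_lt j hm⟩)) := by
  constructor
  · -- hard direction
    intro hL
    obtain ⟨w, -, -, -⟩ := hL 1
    set z0 := w 0 with hz0
    by_cases hI : ∃ x : ℕ → Z, (∀ j, x j ∈ X) ∧ (∀ j, x j ≤ x (j + 1)) ∧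
        (∀ j, x j ∈ P ⟨j % m, Nat.mod_lt j hm⟩)
    · obtain ⟨x, hx1, hx2, hx3⟩ := hI
      exact ⟨x, hx1, Or.inl hx2, hx3⟩
    · -- build the nonincreasing sequence by iterating `master`
      have hmm : m ≤ m * m := by
        calc m = m * 1 := (Nat.mul_one m).symm
        _ ≤ m * m := Nat.mul_le_mul_left m hm
      have hRichU : Rich X m hm P Set.univ := by
        intro k
        obtain ⟨x, h1, h2, h3⟩ := hL k
        exact ⟨x, h1, h2, h3, fun _ _ => trivial⟩
      set α := {C : Set Z // Rich X m hm P C} with hα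
      have hstep : ∀ a : α, ∃ b : α, ∃ B : ℕ → Z, (∀ i, B i ∈ X) ∧ (∀ i, B i ∈ a.1) ∧
          (∀ i, B i ∈ P ⟨i % m, Nat.mod_lt i hm⟩) ∧
          (∀ i j, i ≤ j → j < m → B j ≤ B i) ∧
          b.1 = a.1 ∩ Set.Iio (B (m - 1)) := by
        rintro ⟨C, hC⟩
        obtain ⟨B, b1, b2, b3, b4, b5⟩ := master X m hm P C z0 hC hI
        exact ⟨⟨C ∩ Set.Iio (B (m - 1)), b5⟩, B, b1, b2, b3, b4, rfl⟩
      obtain ⟨f, hf0, hfR⟩ := dc _ hstep ⟨Set.univ, hRichU⟩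
      choose B k1 k2 k3 k4 k5 using hfR
      refine ⟨fun j => B (j / m) (j % m), fun j => k1 _ _, Or.inr ?_, ?_⟩
      · intro j
        show B ((j + 1) / m) ((j + 1) % m) ≤ B (j / m) (j % m)
        obtain ⟨q, r, hrm, hj⟩ : ∃ q r, r < m ∧ j = m * q + r :=
          ⟨j / m, j % m, Nat.mod_lt j hm, (Nat.div_add_mod j m).symm⟩
        have hdiv : j / m = q := by
          rw [hj, Nat.mul_add_div hm, Nat.div_eq_of_lt hrm]; omega
        have hmod : j % m = r := by
          rw [hj, Nat.mul_add_mod, Nat.mod_eq_of_lt hrm]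
        rw [hdiv, hmod]
        by_cases hb : r + 1 < m
        · have hj1 : j + 1 = m * q + (r + 1) := by omega
          have hdiv1 : (j + 1) / m = q := by
            rw [hj1, Nat.mul_add_div hm, Nat.div_eq_of_lt hb]; omega
          have hmod1 : (j + 1) % m = r + 1 := by
            rw [hj1, Nat.mul_add_mod, Nat.mod_eq_of_lt hb]
          rw [hdiv1, hmod1]
          exact k4 q r (r + 1) (Nat.le_succ r) hb
        · have hbe : r = m - 1 := by omega
          have hj1 : j + 1 = m * (q + 1) := by
            have : m * (q + 1) = m * q + m := Nat.mul_succ m q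
            omega
          have hdiv1 : (j + 1) / m = q + 1 := by
            rw [hj1, Nat.mul_div_cancel_left _ hm]
          have hmod1 : (j + 1) % m = 0 := by
            rw [hj1, Nat.mul_mod_right]
          rw [hdiv1, hmod1, hbe]
          have hmem := k2 (q + 1) 0
          rw [k5 q] at hmem
          exact le_of_lt hmem.2
      · intro j
        have := k3 (j / m) (j % m)
        exact Pc P _ _ (Nat.mod_eq_of_lt (Nat.mod_lt j hm)) this
  · -- easy direction
    rintro ⟨x, hxX, hmono, hxP⟩ k
    rcases hmono with hinc | hdec
    · have hx : Monotone x := monotone_nat_of_le_succ hinc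
      exact ⟨x, fun j _ => hxX j, fun i j hij _ => hx hij, fun j _ => hxP j⟩
    · have hx : Antitone x := antitone_nat_of_succ_le hdec
      refine ⟨fun j => x (m * ((k - j / m) * m - j % m) + j % m),
        fun j _ => hxX _, ?_, ?_⟩
      · intro i j hij hj
        apply hx
        have hqj : j / m < k := (Nat.div_lt_iff_lt_mul hm).2 hj
        have hqq : i / m ≤ j / m := Nat.div_le_div_right hij
        have hri : i % m < m := Nat.mod_lt i hm
        have hrj : j % m < m := Nat.mod_lt j hm
        apply Fcore m k (i / m) (i % m) (j / m) (j % m) hm hri hrj hqj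
        rcases Nat.lt_or_ge (i / m) (j / m) with h | h
        · exact Or.inl h
        · have heq : i / m = j / m := le_antisymm hqq h
          refine Or.inr ⟨heq, ?_⟩
          have ei := Nat.div_add_mod i m
          have ej := Nat.div_add_mod j m
          rw [heq] at ei
          omega
      · intro j hj
        have := hxP (m * ((k - j / m) * m - j % m) + j % m)
        refine Pc P _ _ ?_ this
        rw [Nat.mul_add_mod]
        exact Nat.mod_eq_of_lt (Nat.mod_lt j hm)
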